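/- Necessity of the discrete divergence-free condition (Theorem 4.2, explicit counterexample): let γ > 1, θ ∈ (0,1], C > 0, and δ = min{C/8, 1}. Then for the counterexample data: the states U₀, U₁, U₂ all belong to G with 𝓔(U₀) = 𝓔(U₁) = 𝓔(U₂) = p/(γ−1), so each has ideal-EOS pressure p; and for every ε ∈ (0,δ) there exists p ∈ (0,1/γ) such that 𝓔(U(p,ε)) < 0, i.e., U(p,ε) ∉ G. In particular, the 2D standard CDG update can leave G even when all point values and cell averages are admissible, because the discrete divergence-free condition is violated. -/

import Mathlib

open Finset

noncomputable section

/-- Internal energy density 𝓔(U) = E − |m|²/(2ρ) − |B|²/2 for U = (ρ,m,B,E) ∈ ℝ⁸. -/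
def mhdE (U : Fin 8 → ℝ) : ℝ :=
  U 7 - (U 1 ^ 2 + U 2 ^ 2 + U 3 ^ 2) / (2 * U 0) - (U 4 ^ 2 + U 5 ^ 2 + U 6 ^ 2) / 2

/-- The admissible state set G = {U : ρ > 0 ∧ 𝓔(U) > 0}. -/
def admG : Set (Fin 8 → ℝ) := {U | 0 < U 0 ∧ 0 < mhdE U}

/-- Velocity components v = m/ρ. -/
def vcomp (U : Fin 8 → ℝ) (i : Fin 3) : ℝ := ![U 1, U 2, U 3] i / U 0

/-- Magnetic field components. -/
def Bcomp (U : Fin 8 → ℝ) (i : Fin 3) : ℝ := ![U 4, U 5, U 6] i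

/-- U · n*(v*,B*) where n*(v*,B*) = (|v*|²/2, −v*, −B*, 1). -/
def dotNstar (vs Bs : Fin 3 → ℝ) (U : Fin 8 → ℝ) : ℝ :=
  U 0 * (vs 0 ^ 2 + vs 1 ^ 2 + vs 2 ^ 2) / 2
    - (U 1 * vs 0 + U 2 * vs 1 + U 3 * vs 2)
    - (U 4 * Bs 0 + U 5 * Bs 1 + U 6 * Bs 2) + U 7

/-- The ideal-MHD flux F_i(U;p). -/
def flux (i : Fin 3) (U : Fin 8 → ℝ) (p : ℝ) : Fin 8 → ℝ :=
  let v : Fin 3 → ℝ := fun j => ![U 1, U 2, U 3] j / U 0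
  let B : Fin 3 → ℝ := ![U 4, U 5, U 6]
  let pt : ℝ := p + (B 0 ^ 2 + B 1 ^ 2 + B 2 ^ 2) / 2
  ![U 0 * v i,
    v i * U 1 - B i * B 0 + (if i = 0 then pt else 0),
    v i * U 2 - B i * B 1 + (if i = 1 then pt else 0),
    v i * U 3 - B i * B 2 + (if i = 2 then pt else 0),
    v i * B 0 - B i * v 0,
    v i * B 1 - B i * v 1,
    v i * B 2 - B i * v 2,
    v i * (U 7 + pt) - B i * (v 0 * B 0 + v 1 * B 1 + v 2 * B 2)]

/-- 𝓒_s = p/(ρ√(2e)) with e = 𝓔(U)/ρ. -/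
def Cs (U : Fin 8 → ℝ) (p : ℝ) : ℝ :=
  p / (U 0 * Real.sqrt (2 * (mhdE U / U 0)))

/-- The speed 𝓒_i(U;p). -/
def Cfast (i : Fin 3) (U : Fin 8 → ℝ) (p : ℝ) : ℝ :=
  (1 / Real.sqrt 2) *
    Real.sqrt ((U 4 ^ 2 + U 5 ^ 2 + U 6 ^ 2) / U 0 + (Cs U p) ^ 2
      + Real.sqrt (((U 4 ^ 2 + U 5 ^ 2 + U 6 ^ 2) / U 0 + (Cs U p) ^ 2) ^ 2
          - 4 * (Bcomp U i) ^ 2 * (Cs U p) ^ 2 / U 0))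

/-- The bound α_i(U,Ũ) of Lemma 2.2. -/
def alphaSpeed (i : Fin 3) (U Ut : Fin 8 → ℝ) (p pt : ℝ) : ℝ :=
  max (max (|vcomp U i| + Cfast i U p) (|vcomp Ut i| + Cfast i Ut pt))
    (|Real.sqrt (U 0) * vcomp U i + Real.sqrt (Ut 0) * vcomp Ut i|
        / (Real.sqrt (U 0) + Real.sqrt (Ut 0))
      + max (Cfast i U p) (Cfast i Ut pt))
  + Real.sqrt ((Bcomp U 0 - Bcomp Ut 0) ^ 2 + (Bcomp U 1 - Bcomp Ut 1) ^ 2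
      + (Bcomp U 2 - Bcomp Ut 2) ^ 2) / (Real.sqrt (U 0) + Real.sqrt (Ut 0))

/-- The Godunov–Powell source vector S(U) = (0, B, v, v·B). -/
def srcS (U : Fin 8 → ℝ) : Fin 8 → ℝ :=
  ![0, U 4, U 5, U 6, U 1 / U 0, U 2 / U 0, U 3 / U 0,
    (U 1 * U 4 + U 2 * U 5 + U 3 * U 6) / U 0]

/-- The state U₀ of the counterexample. -/
def cexU0 (γ δ ε p : ℝ) : Fin 8 → ℝ :=
  ![1, 1 + δ * ε, 0, 0, 1 + ε / 2, 0, 0,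
    (1 + δ * ε) ^ 2 / 2 + (2 + ε) ^ 2 / 8 + p / (γ - 1)]

/-- The state U₁ of the counterexample. -/
def cexU1 (γ p : ℝ) : Fin 8 → ℝ :=
  ![1, 1, 0, 0, 1, 0, 0, 1 + p / (γ - 1)]

/-- The state U₂ of the counterexample. -/
def cexU2 (γ ε p : ℝ) : Fin 8 → ℝ :=
  ![1, 1, 0, 0, 1 + ε, 0, 0, (1 + (1 + ε) ^ 2) / 2 + p / (γ - 1)]

/-- The state U(p,ε) of the counterexample, with ã₁ = 5 and ã₂ = √(γp+4) + 1. -/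
def cexU (γ θ C ε p : ℝ) : Fin 8 → ℝ :=
  (1 - θ) • cexU0 γ (min (C / 8) 1) ε p + (θ / 2) • (cexU1 γ p + cexU2 γ ε p)
    + (θ * C / (5 + (Real.sqrt (γ * p + 4) + 1))) •
        (flux 0 (cexU1 γ p) p - flux 0 (cexU2 γ ε p) p)


set_option maxHeartbeats 1000000 in
lemma mhdE_cexU (γ θ C ε p : ℝ) (hγ : γ - 1 ≠ 0) :
    mhdE (cexU γ θ C ε p) =
      -(θ * C / (5 + (Real.sqrt (γ * p + 4) + 1))) * ε * (1 + ε / 2)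
      + ε ^ 2 * ((1 - θ) * (min (C / 8) 1) ^ 2
          - ((1 - θ) * (min (C / 8) 1)
              + (θ * C / (5 + (Real.sqrt (γ * p + 4) + 1))) * (1 + ε / 2)) ^ 2) / 2
      + θ * ε ^ 2 / 8 + p / (γ - 1) := by
  show ((((1 - θ) * ((1 + (min (C / 8) 1) * ε) ^ 2 / 2 + (2 + ε) ^ 2 / 8 + p / (γ - 1))) + ((θ / 2) * ((1 + p / (γ - 1)) + ((1 + (1 + ε) ^ 2) / 2 + p / (γ - 1))))) + ((θ * C / (5 + (Real.sqrt (γ * p + 4) + 1))) * (((((1) / (1)) * ((1 + p / (γ - 1)) + ((p + (((1)) ^ 2 + ((0)) ^ 2 + ((0)) ^ 2) / 2)))) - (((1)) * (((((1) / (1)) * ((1))) + (((0) / (1)) * ((0)))) + (((0) / (1)) * ((0)))))) - ((((1) / (1)) * (((1 + (1 + ε) ^ 2) / 2 + p / (γ - 1)) + ((p + (((1 + ε)) ^ 2 + ((0)) ^ 2 + ((0)) ^ 2) / 2)))) - (((1 + ε)) * (((((1) / (1)) * ((1 + ε))) + (((0) / (1)) * ((0)))) + (((0) / (1)) * ((0)))))))))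 - (((((1 - θ) * (1 + (min (C / 8) 1) * ε)) + ((θ / 2) * ((1) + (1)))) + ((θ * C / (5 + (Real.sqrt (γ * p + 4) + 1))) * ((((((1) / (1)) * (1)) - (((1)) * ((1)))) + ((p + (((1)) ^ 2 + ((0)) ^ 2 + ((0)) ^ 2) / 2))) - (((((1) / (1)) * (1)) - (((1 + ε)) * ((1 + ε)))) + ((p + (((1 + ε)) ^ 2 + ((0)) ^ 2 + ((0)) ^ 2) / 2)))))) ^ 2 + ((((1 - θ) * (0)) + ((θ / 2) * ((0) + (0)))) + ((θ * C / (5 + (Real.sqrt (γ * p + 4) + 1))) * ((((((1) / (1)) * (0)) - (((1)) * ((0)))) + (0)) - (((((1) / (1)) * (0)) - (((1 + ε)) * ((0)))) + (0))))) ^ 2 + ((((1 - θ) * (0)) + ((θ / 2) * ((0) + (0)))) + ((θ * C / (5 + (Real.sqrt (γ * p + 4) + 1))) * ((((((1) / (1)) * (0)) - (((1)) * ((0)))) + (0)) - (((((1) / (1)) * (0)) - (((1 + ε)) * ((0)))) + (0))))) ^ 2) / (2 * ((((1 - θ) * (1)) + ((θ / 2) * ((1) + (1)))) + ((θ * C /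 (5 + (Real.sqrt (γ * p + 4) + 1))) * (((1) * ((1) / (1))) - ((1) * ((1) / (1))))))) - (((((1 - θ) * (1 + ε / 2)) + ((θ / 2) * ((1) + (1 + ε)))) + ((θ * C / (5 + (Real.sqrt (γ * p + 4) + 1))) * (((((1) / (1)) * ((1))) - (((1)) * ((1) / (1)))) - ((((1) / (1)) * ((1 + ε))) - (((1 + ε)) * ((1) / (1))))))) ^ 2 + ((((1 - θ) * (0)) + ((θ / 2) * ((0) + (0)))) + ((θ * C / (5 + (Real.sqrt (γ * p + 4) + 1))) * (((((1) / (1)) * ((0))) - (((1)) * ((0) / (1)))) - ((((1) / (1)) * ((0))) - (((1 + ε)) * ((0) / (1))))))) ^ 2 + ((((1 - θ) * (0)) + ((θ / 2) * ((0) + (0)))) + ((θ * C / (5 + (Real.sqrt (γ * p + 4) + 1))) * (((((1) / (1)) * ((0))) - (((1)) * ((0) / (1)))) - ((((1) / (1)) * ((0))) - (((1 + ε)) * ((0) / (1))))))) ^ 2) / 2 = _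
  set c := θ * C / (5 + (Real.sqrt (γ * p + 4) + 1)) with hc
  set m := min (C / 8) 1 with hm
  field_simp
  ring

set_option maxHeartbeats 1000000 in
/-- Necessity of the discrete divergence-free condition
(Theorem 4.2, explicit counterexample). -/
theorem counterexample_not_pp (γ θ C : ℝ) (hγ : 1 < γ)
    (hθ : θ ∈ Set.Ioc (0 : ℝ) 1) (hC : 0 < C) :
    (∀ ε ∈ Set.Ioo (0 : ℝ) (min (C / 8) 1), ∀ p ∈ Set.Ioo (0 : ℝ) (1 / γ),
      cexU0 γ (min (C / 8) 1) ε p ∈ admG ∧ cexU1 γ p ∈ admG ∧ cexU2 γ ε p ∈ admG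
      ∧ mhdE (cexU0 γ (min (C / 8) 1) ε p) = p / (γ - 1)
      ∧ mhdE (cexU1 γ p) = p / (γ - 1)
      ∧ mhdE (cexU2 γ ε p) = p / (γ - 1))
    ∧ (∀ ε ∈ Set.Ioo (0 : ℝ) (min (C / 8) 1),
        ∃ p ∈ Set.Ioo (0 : ℝ) (1 / γ), mhdE (cexU γ θ C ε p) < 0) := by
  obtain ⟨hθ0, hθ1⟩ := hθ
  have hγ1 : (0:ℝ) < γ - 1 := by linarith
  have hγ' : γ - 1 ≠ 0 := ne_of_gt hγ1
  constructor
  · rintro ε ⟨hε0, hεδ⟩ p ⟨hp0, hp1⟩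
    have hpos : 0 < p / (γ - 1) := div_pos hp0 hγ1
    have e0 : mhdE (cexU0 γ (min (C / 8) 1) ε p) = p / (γ - 1) := by
      show ((1 + (min (C / 8) 1) * ε) ^ 2 / 2 + (2 + ε) ^ 2 / 8 + p / (γ - 1))
          - ((1 + (min (C / 8) 1) * ε) ^ 2 + (0:ℝ) ^ 2 + (0:ℝ) ^ 2) / (2 * 1)
          - ((1 + ε / 2) ^ 2 + (0:ℝ) ^ 2 + (0:ℝ) ^ 2) / 2 = p / (γ - 1)
      ring
    have e1 : mhdE (cexU1 γ p) = p / (γ - 1) := by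
      show (1 + p / (γ - 1)) - ((1:ℝ) ^ 2 + (0:ℝ) ^ 2 + (0:ℝ) ^ 2) / (2 * 1)
          - ((1:ℝ) ^ 2 + (0:ℝ) ^ 2 + (0:ℝ) ^ 2) / 2 = p / (γ - 1)
      ring
    have e2 : mhdE (cexU2 γ ε p) = p / (γ - 1) := by
      show ((1 + (1 + ε) ^ 2) / 2 + p / (γ - 1)) - ((1:ℝ) ^ 2 + (0:ℝ) ^ 2 + (0:ℝ) ^ 2) / (2 * 1)
          - ((1 + ε) ^ 2 + (0:ℝ) ^ 2 + (0:ℝ) ^ 2) / 2 = p / (γ - 1)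
      ring
    exact ⟨⟨one_pos, by rw [e0]; exact hpos⟩, ⟨one_pos, by rw [e1]; exact hpos⟩,
      ⟨one_pos, by rw [e2]; exact hpos⟩, e0, e1, e2⟩
  · rintro ε ⟨hε0, hεδ⟩
    set δ : ℝ := min (C / 8) 1 with hδdef
    have hδ0 : 0 < δ := lt_trans hε0 hεδ
    have hδ1 : δ ≤ 1 := min_le_right _ _
    have hδC : 8 * δ ≤ C := by
      have := min_le_left (C / 8) 1
      rw [← hδdef] at this
      linarith
    refine ⟨min (1 / (2 * γ)) ((γ - 1) * θ * ε ^ 2 / 2), ⟨?_, ?_⟩, ?_⟩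
    · apply lt_min
      · positivity
      · positivity
    · calc min (1 / (2 * γ)) ((γ - 1) * θ * ε ^ 2 / 2) ≤ 1 / (2 * γ) := min_le_left _ _
        _ < 1 / γ := by
          apply div_lt_div_of_pos_left one_pos (by linarith) (by linarith)
    · set p : ℝ := min (1 / (2 * γ)) ((γ - 1) * θ * ε ^ 2 / 2) with hpdef
      have hp0 : 0 < p := lt_min (by positivity) (by positivity)
      have hpγ : γ * p ≤ 1 / 2 := by
        have h1 : p ≤ 1 / (2 * γ) := min_le_left _ _
        have h2 : γ * (1 / (2 * γ)) = 1 / 2 := by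
          field_simp
        calc γ * p ≤ γ * (1 / (2 * γ)) := by
              apply mul_le_mul_of_nonneg_left h1 (by linarith)
          _ = 1 / 2 := h2
      have hpe : p / (γ - 1) ≤ θ * ε ^ 2 / 2 := by
        have h1 : p ≤ (γ - 1) * θ * ε ^ 2 / 2 := min_le_right _ _
        rw [div_le_iff₀ hγ1]
        calc p ≤ (γ - 1) * θ * ε ^ 2 / 2 := h1
          _ = θ * ε ^ 2 / 2 * (γ - 1) := by ring
      have hs0 : 0 ≤ Real.sqrt (γ * p + 4) := Real.sqrt_nonneg _
      have hs3 : Real.sqrt (γ * p + 4) < 3 := by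
        rw [show (3:ℝ) = Real.sqrt 9 by
          rw [show (9:ℝ) = 3 ^ 2 by norm_num, Real.sqrt_sq (by norm_num)]]
        exact Real.sqrt_lt_sqrt (by nlinarith) (by nlinarith)
      set c : ℝ := θ * C / (5 + (Real.sqrt (γ * p + 4) + 1)) with hcdef
      have hc0 : 0 < c := by
        apply div_pos (by positivity)
        linarith
      have hc : 8 * θ * δ / 9 < c := by
        rw [hcdef]
        have h9 : 5 + (Real.sqrt (γ * p + 4) + 1) < 9 := by linarith
        have hden : 0 < 5 + (Real.sqrt (γ * p + 4) + 1) := by linarith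
        calc 8 * θ * δ / 9 ≤ θ * C / 9 := by
              apply div_le_div_of_nonneg_right ?_ (by norm_num)
              nlinarith
          _ < θ * C / (5 + (Real.sqrt (γ * p + 4) + 1)) := by
              apply div_lt_div_of_pos_left (by positivity) hden h9
      rw [mhdE_cexU γ θ C ε p hγ']
      rw [← hδdef, ← hcdef]
      set a : ℝ := (1 - θ) * δ + c * (1 + ε / 2) with hadef
      clear_value a c p δ
      have ha : δ * (1 - θ / 9) ≤ a := by
        rw [hadef]
        nlinarith
      have ha0 : 0 ≤ δ * (1 - θ / 9) := by nlinarith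
      have ha2 : δ ^ 2 * (1 - 2 * θ / 9) ≤ a ^ 2 := by
        have hsq := pow_le_pow_left₀ ha0 ha 2
        nlinarith [sq_nonneg (δ * θ)]
      have h2 : ε ^ 2 * ((1 - θ) * δ ^ 2 - a ^ 2) / 2 ≤ ε ^ 2 * (-(7 * θ * δ ^ 2 / 9)) / 2 := by
        have hkey : (1 - θ) * δ ^ 2 - a ^ 2 ≤ -(7 * θ * δ ^ 2 / 9) := by nlinarith
        have h2' := mul_le_mul_of_nonneg_left hkey (sq_nonneg ε)
        linarith
      have h1a : 8 * θ / 9 * ε ^ 2 ≤ 8 * θ * δ / 9 * ε := by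
        have hq : 0 ≤ 8 * θ / 9 * ε * (δ - ε) :=
          mul_nonneg (mul_nonneg (by linarith) hε0.le) (by linarith)
        nlinarith [hq]
      have h1b : 8 * θ * δ / 9 * ε ≤ c * ε :=
        mul_le_mul_of_nonneg_right hc.le hε0.le
      have h1c : c * ε ≤ c * ε * (1 + ε / 2) := by nlinarith [mul_pos hc0 hε0]
      have h1 : -c * ε * (1 + ε / 2) ≤ -(8 * θ / 9 * ε ^ 2) := by nlinarith
      have hfin : ε ^ 2 * (-(7 * θ * δ ^ 2 / 9)) / 2 ≤ 0 := by
        have hq : 0 ≤ ε ^ 2 * (θ * δ ^ 2) :=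
          mul_nonneg (sq_nonneg ε) (mul_nonneg hθ0.le (sq_nonneg δ))
        nlinarith [hq]
      have hθε : 0 < θ * ε ^ 2 := by positivity
      linarith
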